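/- Let I and K be admissible ideals on ℕ and X a normed space containing a sequence (z_n) of points distinct from some x ∈ X with z_n weakly convergent to x. If for every sequence in X weak I-convergence to a point implies weak I^K-convergence to that point, then the condition AP(I,K) holds: for every family of mutually disjoint sets A_n ∈ I there exist sets B_n ∈ I with A_n Δ B_n ∈ K for each n and ∪_n B_n ∈ I. -/

import Mathlib

open Classical Filter

/-- An ideal on ℕ: contains ∅, closed under subsets and finite unions. -/
def IsIdeal (I : Set (Set ℕ)) : Prop :=
  ∅ ∈ I ∧ (∀ A B : Set ℕ, A ∈ I → B ⊆ A → B ∈ I) ∧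
    (∀ A B : Set ℕ, A ∈ I → B ∈ I → A ∪ B ∈ I)

/-- A nontrivial (proper) ideal. -/
def NontrivialIdeal (I : Set (Set ℕ)) : Prop :=
  IsIdeal I ∧ Set.univ ∉ I ∧ I ≠ {∅}

/-- An admissible ideal: nontrivial and containing all singletons. -/
def AdmissibleIdeal (I : Set (Set ℕ)) : Prop :=
  NontrivialIdeal I ∧ ∀ n : ℕ, ({n} : Set ℕ) ∈ I

/-- The modified sequence: `x n` on `M`, the constant `a` off `M`. -/
noncomputable def modSeq {X : Type*} (M : Set ℕ) (x : ℕ → X) (a : X) : ℕ → X :=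
  fun n => if n ∈ M then x n else a

/-- Weak `K`-convergence of a sequence in a normed space. -/
def WeakConv {X : Type*} [NormedAddCommGroup X] [NormedSpace ℝ X]
    (K : Set (Set ℕ)) (x : ℕ → X) (a : X) : Prop :=
  ∀ f : X →L[ℝ] ℝ, ∀ ε : ℝ, 0 < ε → {n : ℕ | ε ≤ |f (x n) - f a|} ∈ K

/-- Weak `I^K`-convergence: some `M` in the dual filter of `I` such that the
modified sequence is weakly `K`-convergent. -/
def WeakIK {X : Type*} [NormedAddCommGroup X] [NormedSpace ℝ X]
    (I K : Set (Set ℕ)) (x : ℕ → X) (a : X) : Prop :=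
  ∃ M : Set ℕ, Mᶜ ∈ I ∧ WeakConv K (modSeq M x a) a

/-- Ordinary weak convergence. -/
def WeakTendsto {X : Type*} [NormedAddCommGroup X] [NormedSpace ℝ X]
    (x : ℕ → X) (a : X) : Prop :=
  ∀ f : X →L[ℝ] ℝ, Tendsto (fun n => f (x n)) atTop (nhds (f a))

/-- Weak* `K`-convergence of a sequence of continuous linear functionals. -/
def WeakStarConv {X : Type*} [NormedAddCommGroup X] [NormedSpace ℝ X]
    (K : Set (Set ℕ)) (f : ℕ → X →L[ℝ] ℝ) (g : X →L[ℝ] ℝ) : Prop :=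
  ∀ x : X, ∀ ε : ℝ, 0 < ε → {n : ℕ | ε ≤ |f n x - g x|} ∈ K

/-- Weak* `I^K`-convergence. -/
def WeakStarIK {X : Type*} [NormedAddCommGroup X] [NormedSpace ℝ X]
    (I K : Set (Set ℕ)) (f : ℕ → X →L[ℝ] ℝ) (g : X →L[ℝ] ℝ) : Prop :=
  ∃ M : Set ℕ, Mᶜ ∈ I ∧ WeakStarConv K (modSeq M f g) g

/-- Ordinary weak* convergence (pointwise on X). -/
def WeakStarTendsto {X : Type*} [NormedAddCommGroup X] [NormedSpace ℝ X]
    (f : ℕ → X →L[ℝ] ℝ) (g : X →L[ℝ] ℝ) : Prop :=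
  ∀ x : X, Tendsto (fun n => f n x) atTop (nhds (g x))

/-- The join of two ideals: `{A ∪ B : A ∈ I, B ∈ K}`. -/
def idealJoin (I K : Set (Set ℕ)) : Set (Set ℕ) :=
  {C | ∃ A ∈ I, ∃ B ∈ K, C = A ∪ B}

theorem stmt_10 {X : Type*} [NormedAddCommGroup X] [NormedSpace ℝ X]
    (I K : Set (Set ℕ)) (hI : AdmissibleIdeal I) (hK : AdmissibleIdeal K)
    (x : X) (z : ℕ → X) (hz : ∀ n, z n ≠ x) (hzconv : WeakTendsto z x)
    (h : ∀ (w : ℕ → X) (a : X), WeakConv I w a → WeakIK I K w a) :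
    ∀ A : ℕ → Set ℕ, (∀ n, A n ∈ I) → (∀ i j, i ≠ j → A i ∩ A j = ∅) →
      ∃ B : ℕ → Set ℕ, (∀ n, B n ∈ I) ∧ (∀ n, symmDiff (A n) (B n) ∈ K) ∧
        (⋃ n, B n) ∈ I := by
  intro A hA hdisj
  classical
  -- the auxiliary sequence
  set y : ℕ → X := fun m => if h : ∃ n, m ∈ A n then z h.choose else x with hy
  have hym : ∀ n m, m ∈ A n → y m = z n := by
    intro n m hm
    have hex : ∃ k, m ∈ A k := ⟨n, hm⟩
    have hk : m ∈ A hex.choose := hex.choose_spec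
    have : hex.choose = n := by
      by_contra hne
      have := hdisj _ _ hne
      have : m ∈ A hex.choose ∩ A n := ⟨hk, hm⟩
      rw [hdisj _ _ hne] at this
      exact this
    simp only [hy, dif_pos hex, this]
  have hyI : WeakConv I y x := by
    intro f ε hε
    have hto := hzconv f
    rw [Metric.tendsto_atTop] at hto
    obtain ⟨N, hN⟩ := hto ε hε
    have hsub : {m : ℕ | ε ≤ |f (y m) - f x|} ⊆ ⋃ n ∈ Finset.range N, A n := by
      intro m hm
      simp only [Set.mem_setOf_eq] at hm
      by_cases hex : ∃ n, m ∈ A n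
      · obtain ⟨n, hn⟩ := hex
        rw [hym n m hn] at hm
        have hnN : n < N := by
          by_contra hge
          have := hN n (le_of_not_gt hge)
          rw [Real.dist_eq] at this
          linarith
        exact Set.mem_biUnion (Finset.mem_range.mpr hnN) hn
      · simp only [hy, dif_neg hex, sub_self, abs_zero] at hm
        linarith
    have hU : (⋃ n ∈ Finset.range N, A n) ∈ I := by
      induction (Finset.range N) using Finset.induction with
      | empty => simpa using hI.1.1.1
      | insert _ _ _ ih =>
        rw [Finset.set_biUnion_insert]
        exact hI.1.1.2.2 _ _ (hA _) ih
    exact hI.1.1.2.1 _ _ hU hsub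
  obtain ⟨M, hMc, hWK⟩ := h y x hyI
  refine ⟨fun n => A n ∩ Mᶜ, fun n => hI.1.1.2.1 _ _ (hA n) Set.inter_subset_left,
    ?_, hI.1.1.2.1 _ _ hMc (by simp)⟩
  intro n
  have hsd : symmDiff (A n) (A n ∩ Mᶜ) = A n ∩ M := by
    ext m
    simp only [Set.mem_symmDiff, Set.mem_inter_iff, Set.mem_compl_iff]
    tauto
  rw [hsd]
  obtain ⟨g, hg1, hg2⟩ := exists_dual_vector ℝ (z n - x) (norm_ne_zero_iff.mpr (sub_ne_zero.mpr (hz n)))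
  have hε : (0:ℝ) < ‖z n - x‖ := norm_pos_iff.mpr (sub_ne_zero.mpr (hz n))
  have hKset := hWK g ‖z n - x‖ hε
  refine hK.1.1.2.1 _ _ hKset ?_
  intro m hm
  obtain ⟨hmA, hmM⟩ := hm
  have : modSeq M y x m = z n := by
    simp only [modSeq, if_pos hmM]
    exact hym n m hmA
  simp only [Set.mem_setOf_eq, this]
  have : g (z n) - g x = g (z n - x) := by rw [map_sub]
  rw [this, hg2]
  simp [abs_of_pos hε]
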